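/- Let 𝒜 be a regular multiplier Hopf algebroid which is additionally a multiplier Hopf *-algebroid, i.e. A carries an involution a↦a* (conjugate-linear, (ab)*=b*a*, (a*)*=a) such that B and C are *-closed in M(A) (for x∈B the multiplier x* defined by x*a:=(a*x)* and ax*:=(xa*)* again lies in B, and similarly for C), S_B((S_C(y*))*)=y for all y∈C, S_C((S_B(x*))*)=x for all x∈B, and for all a,b∈A: if Σⱼuⱼ⊗vⱼ∈A⊗A represents T̃λ(a⊗b) then λT̃(a*⊗b*)=Σⱼuⱼ*⊗vⱼ* in A⊗̲A, and if Σⱼuⱼ⊗vⱼ represents T̃ρ(a⊗b) then ρT̃(a*⊗b*)=Σⱼuⱼ*⊗vⱼ* in A⊗̲A. Then the left counit ε_B, the right counit ε_C and the invertible antipode S of 𝒜 satisfy ε_C(a*) = (S_B(ε_B(a)))*, ε_B(a*) = (S_C(ε_C(a)))*, and S((S(a*))*) = a for all a∈A. -/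
import Mathlib


open scoped TensorProduct

noncomputable section

/-- A multiplier of a non-unital complex algebra `A`: a pair `T = (L, R)` of ℂ-linear maps
`A → A` satisfying `L (a*b) = L a * b`, `R (a*b) = a * R b` and `R a * b = a * L b`.
We write `T a := L a` and `a T := R a`. -/
structure Mult (A : Type*) [NonUnitalRing A] [Module ℂ A]
    [SMulCommClass ℂ A A] [IsScalarTower ℂ A A] where
  L : A →ₗ[ℂ] A
  R : A →ₗ[ℂ] A
  hL : ∀ a b : A, L (a * b) = L a * b
  hR : ∀ a b : A, R (a * b) = a * R b
  hC : ∀ a b : A, R a * b = a * L b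

namespace Mult

variable {A : Type*} [NonUnitalRing A] [Module ℂ A] [SMulCommClass ℂ A A] [IsScalarTower ℂ A A]

/-- Multiplication of multipliers: `(L,R)·(L′,R′) = (L∘L′, R′∘R)`. -/
instance : Mul (Mult A) :=
  ⟨fun T U =>
    { L := T.L ∘ₗ U.L
      R := U.R ∘ₗ T.R
      hL := fun a b => by simp [U.hL, T.hL]
      hR := fun a b => by simp [T.hR, U.hR]
      hC := fun a b => by simp [U.hC, T.hC] }⟩

instance : Add (Mult A) :=
  ⟨fun T U =>
    { L := T.L + U.L
      R := T.R + U.R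
      hL := fun a b => by simp [T.hL, U.hL, add_mul]
      hR := fun a b => by simp [T.hR, U.hR, mul_add]
      hC := fun a b => by simp [T.hC, U.hC, add_mul, mul_add] }⟩

instance : SMul ℂ (Mult A) :=
  ⟨fun c T =>
    { L := c • T.L
      R := c • T.R
      hL := fun a b => by simp [T.hL, smul_mul_assoc]
      hR := fun a b => by simp [T.hR, mul_smul_comm]
      hC := fun a b => by simp [T.hC, smul_mul_assoc, mul_smul_comm] }⟩

end Mult

section Maps

variable {A : Type*} [NonUnitalRing A] [Module ℂ A] [SMulCommClass ℂ A A] [IsScalarTower ℂ A A]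

/-- `w ↦ w · (c ⊗ 1)` on `A ⊗ A`. -/
def rmul₁ (c : A) : A ⊗[ℂ] A →ₗ[ℂ] A ⊗[ℂ] A :=
  TensorProduct.map (LinearMap.mulRight ℂ c) LinearMap.id

/-- `w ↦ w · (1 ⊗ c)` on `A ⊗ A`. -/
def rmul₂ (c : A) : A ⊗[ℂ] A →ₗ[ℂ] A ⊗[ℂ] A :=
  TensorProduct.map LinearMap.id (LinearMap.mulRight ℂ c)

/-- `w ↦ (c ⊗ 1) · w` on `A ⊗ A`. -/
def lmul₁ (c : A) : A ⊗[ℂ] A →ₗ[ℂ] A ⊗[ℂ] A :=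
  TensorProduct.map (LinearMap.mulLeft ℂ c) LinearMap.id

/-- `w ↦ (1 ⊗ c) · w` on `A ⊗ A`. -/
def lmul₂ (c : A) : A ⊗[ℂ] A →ₗ[ℂ] A ⊗[ℂ] A :=
  TensorProduct.map LinearMap.id (LinearMap.mulLeft ℂ c)

/-- `b ↦ a ⊗ b`. -/
def tmulL (a : A) : A →ₗ[ℂ] A ⊗[ℂ] A := TensorProduct.mk ℂ A A a

/-- `a ↦ a ⊗ b`. -/
def tmulR (b : A) : A →ₗ[ℂ] A ⊗[ℂ] A := (TensorProduct.mk ℂ A A).flip b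

/-- `(x ⊗ y) ⊗ v ↦ x ⊗ (y * v)`. -/
def mulIn23 : (A ⊗[ℂ] A) ⊗[ℂ] A →ₗ[ℂ] A ⊗[ℂ] A :=
  TensorProduct.map LinearMap.id (LinearMap.mul' ℂ A) ∘ₗ
    (TensorProduct.assoc ℂ A A A).toLinearMap

/-- `(x ⊗ y) ⊗ v ↦ x ⊗ (v * y)`. -/
def mulIn23' : (A ⊗[ℂ] A) ⊗[ℂ] A →ₗ[ℂ] A ⊗[ℂ] A :=
  TensorProduct.map LinearMap.id
      (LinearMap.mul' ℂ A ∘ₗ (TensorProduct.comm ℂ A A).toLinearMap) ∘ₗ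
    (TensorProduct.assoc ℂ A A A).toLinearMap

/-- `u ⊗ (x ⊗ y) ↦ (x * u) ⊗ y`. -/
def mulIn1 : A ⊗[ℂ] (A ⊗[ℂ] A) →ₗ[ℂ] A ⊗[ℂ] A :=
  TensorProduct.map (LinearMap.mul' ℂ A) LinearMap.id ∘ₗ
    (TensorProduct.assoc ℂ A A A).symm.toLinearMap ∘ₗ
    (TensorProduct.leftComm ℂ A A A).toLinearMap

/-- `u ⊗ (x ⊗ y) ↦ (u * x) ⊗ y`. -/
def mulIn1' : A ⊗[ℂ] (A ⊗[ℂ] A) →ₗ[ℂ] A ⊗[ℂ] A :=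
  TensorProduct.map (LinearMap.mul' ℂ A ∘ₗ (TensorProduct.comm ℂ A A).toLinearMap)
      LinearMap.id ∘ₗ
    (TensorProduct.assoc ℂ A A A).symm.toLinearMap ∘ₗ
    (TensorProduct.leftComm ℂ A A A).toLinearMap

end Maps

/-- The data of a multiplier bialgebroid `𝒜 = (A, B, C, S_B, S_C, T̃λ, T̃ρ, λT̃, ρT̃)`:
subalgebras `B, C ⊆ M(A)` (given by injective algebra homomorphisms `ιB`, `ιC` into the
multiplier algebra with commuting images), algebra anti-isomorphisms `S_B : B → C` and
`S_C : C → B`, and the four (lifted) canonical maps. -/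
structure MBgdData (A B C : Type*)
    [NonUnitalRing A] [Module ℂ A] [SMulCommClass ℂ A A] [IsScalarTower ℂ A A]
    [NonUnitalRing B] [Module ℂ B] [SMulCommClass ℂ B B] [IsScalarTower ℂ B B]
    [NonUnitalRing C] [Module ℂ C] [SMulCommClass ℂ C C] [IsScalarTower ℂ C C] where
  ιB : B → Mult A
  ιC : C → Mult A
  ιB_add : ∀ x y : B, ιB (x + y) = ιB x + ιB y
  ιB_smul : ∀ (c : ℂ) (x : B), ιB (c • x) = c • ιB x
  ιB_mul : ∀ x y : B, ιB (x * y) = ιB x * ιB y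
  ιB_inj : Function.Injective ιB
  ιC_add : ∀ x y : C, ιC (x + y) = ιC x + ιC y
  ιC_smul : ∀ (c : ℂ) (x : C), ιC (c • x) = c • ιC x
  ιC_mul : ∀ x y : C, ιC (x * y) = ιC x * ιC y
  ιC_inj : Function.Injective ιC
  bc_comm : ∀ (x : B) (y : C), ιB x * ιC y = ιC y * ιB x
  A_ndl : ∀ a : A, (∀ b : A, a * b = 0) → a = 0
  A_ndr : ∀ a : A, (∀ b : A, b * a = 0) → a = 0
  A_idem : Submodule.span ℂ {z : A | ∃ a b : A, z = a * b} = ⊤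
  B_ndl : ∀ x : B, (∀ a : A, (ιB x).L a = 0) → x = 0
  B_ndr : ∀ x : B, (∀ a : A, (ιB x).R a = 0) → x = 0
  C_ndl : ∀ y : C, (∀ a : A, (ιC y).L a = 0) → y = 0
  C_ndr : ∀ y : C, (∀ a : A, (ιC y).R a = 0) → y = 0
  BA_span : Submodule.span ℂ {z : A | ∃ (x : B) (a : A), z = (ιB x).L a} = ⊤
  AB_span : Submodule.span ℂ {z : A | ∃ (x : B) (a : A), z = (ιB x).R a} = ⊤
  CA_span : Submodule.span ℂ {z : A | ∃ (y : C) (a : A), z = (ιC y).L a} = ⊤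
  AC_span : Submodule.span ℂ {z : A | ∃ (y : C) (a : A), z = (ιC y).R a} = ⊤
  SB : B →ₗ[ℂ] C
  SC : C →ₗ[ℂ] B
  SB_bij : Function.Bijective SB
  SC_bij : Function.Bijective SC
  SB_antimul : ∀ x y : B, SB (x * y) = SB y * SB x
  SC_antimul : ∀ x y : C, SC (x * y) = SC y * SC x
  Tl : A ⊗[ℂ] A →ₗ[ℂ] A ⊗[ℂ] A
  Tr : A ⊗[ℂ] A →ₗ[ℂ] A ⊗[ℂ] A
  lT : A ⊗[ℂ] A →ₗ[ℂ] A ⊗[ℂ] A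
  rT : A ⊗[ℂ] A →ₗ[ℂ] A ⊗[ℂ] A

namespace MBgdData

variable {A B C : Type*}
  [NonUnitalRing A] [Module ℂ A] [SMulCommClass ℂ A A] [IsScalarTower ℂ A A]
  [NonUnitalRing B] [Module ℂ B] [SMulCommClass ℂ B B] [IsScalarTower ℂ B B]
  [NonUnitalRing C] [Module ℂ C] [SMulCommClass ℂ C C] [IsScalarTower ℂ C C]

/-- The relation defining `A ⊗̄ A`: the span of all `xa ⊗ b − a ⊗ S_B(x)b`, `x ∈ B`. -/
def relbar (D : MBgdData A B C) : Submodule ℂ (A ⊗[ℂ] A) :=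
  Submodule.span ℂ {z : A ⊗[ℂ] A | ∃ (x : B) (a b : A),
    z = (D.ιB x).L a ⊗ₜ[ℂ] b - a ⊗ₜ[ℂ] (D.ιC (D.SB x)).L b}

/-- The relation defining `A ⊗̲ A`: the span of all `aS_C(y) ⊗ b − a ⊗ by`, `y ∈ C`. -/
def relund (D : MBgdData A B C) : Submodule ℂ (A ⊗[ℂ] A) :=
  Submodule.span ℂ {z : A ⊗[ℂ] A | ∃ (y : C) (a b : A),
    z = (D.ιB (D.SC y)).R a ⊗ₜ[ℂ] b - a ⊗ₜ[ℂ] (D.ιC y).R b}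

/-- `A ⊗̄ A` is non-degenerate for the right multiplications `w ↦ w(c⊗1)`, `w ↦ w(1⊗c)`. -/
def ndbar (D : MBgdData A B C) : Prop :=
  (∀ u : A ⊗[ℂ] A, (∀ c : A, rmul₁ c u ∈ D.relbar) → u ∈ D.relbar) ∧
  (∀ u : A ⊗[ℂ] A, (∀ c : A, rmul₂ c u ∈ D.relbar) → u ∈ D.relbar)

/-- `A ⊗̲ A` is non-degenerate for the left multiplications `w ↦ (c⊗1)w`, `w ↦ (1⊗c)w`. -/
def ndund (D : MBgdData A B C) : Prop :=
  (∀ u : A ⊗[ℂ] A, (∀ c : A, lmul₁ c u ∈ D.relund) → u ∈ D.relund) ∧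
  (∀ u : A ⊗[ℂ] A, (∀ c : A, lmul₂ c u ∈ D.relund) → u ∈ D.relund)

/-- (L1). -/
def cL1 (D : MBgdData A B C) : Prop :=
  (∀ (x : B) (a b : A),
      D.Tl ((D.ιB x).L a ⊗ₜ[ℂ] b) -
        TensorProduct.map LinearMap.id (D.ιC (D.SB x)).R (D.Tl (a ⊗ₜ[ℂ] b)) ∈ D.relbar) ∧
  (∀ (x : B) (a b : A),
      D.Tr (a ⊗ₜ[ℂ] (D.ιC (D.SB x)).L b) -
        TensorProduct.map (D.ιB x).R LinearMap.id (D.Tr (a ⊗ₜ[ℂ] b)) ∈ D.relbar)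

/-- (L2). -/
def cL2 (D : MBgdData A B C) : Prop :=
  (∀ (a b : A) (x x' : B) (y y' : C),
      D.Tl (a ⊗ₜ[ℂ] ((D.ιB x).L ((D.ιC y).L ((D.ιC y').R ((D.ιB x').R b))))) -
        TensorProduct.map (D.ιC y).L (D.ιB x).L
          (TensorProduct.map LinearMap.id (D.ιB x').R
            (D.Tl ((D.ιC y').L a ⊗ₜ[ℂ] b))) ∈ D.relbar) ∧
  (∀ (a b : A) (x x' : B) (y y' : C),
      D.Tr (((D.ιB x).L ((D.ιC y).L ((D.ιC y').R ((D.ιB x').R a)))) ⊗ₜ[ℂ] b) -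
        TensorProduct.map (D.ιC y).L (D.ιB x).L
          (TensorProduct.map (D.ιC y').R LinearMap.id
            (D.Tr (a ⊗ₜ[ℂ] (D.ιB x').L b))) ∈ D.relbar)

/-- (L3). -/
def cL3 (D : MBgdData A B C) : Prop :=
  ∀ a b c : A, rmul₂ c (D.Tl (a ⊗ₜ[ℂ] b)) - rmul₁ a (D.Tr (b ⊗ₜ[ℂ] c)) ∈ D.relbar

/-- (L4). -/
def cL4 (D : MBgdData A B C) : Prop :=
  (∀ a b c : A, D.Tl ((b * a) ⊗ₜ[ℂ] c) - rmul₁ a (D.Tl (b ⊗ₜ[ℂ] c)) ∈ D.relbar) ∧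
  (∀ a b c : A, D.Tr (a ⊗ₜ[ℂ] (b * c)) - rmul₂ c (D.Tr (a ⊗ₜ[ℂ] b)) ∈ D.relbar)

/-- (L5). -/
def cL5 (D : MBgdData A B C) : Prop :=
  (∀ (a b c : A) (u : A ⊗[ℂ] A), u - D.Tl (a ⊗ₜ[ℂ] c) ∈ D.relbar →
      D.Tl (a ⊗ₜ[ℂ] (b * c)) -
        mulIn23 (TensorProduct.map (D.Tl ∘ₗ tmulR b) LinearMap.id u) ∈ D.relbar) ∧
  (∀ (a b c : A) (u : A ⊗[ℂ] A), u - D.Tr (b ⊗ₜ[ℂ] c) ∈ D.relbar →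
      D.Tr ((a * b) ⊗ₜ[ℂ] c) -
        mulIn1 (TensorProduct.map LinearMap.id (D.Tr ∘ₗ tmulL a) u) ∈ D.relbar)

/-- The relation for the triple balanced tensor product appearing in (L6). -/
def span₃L (D : MBgdData A B C) : Submodule ℂ (A ⊗[ℂ] (A ⊗[ℂ] A)) :=
  Submodule.span ℂ
    ({w : A ⊗[ℂ] (A ⊗[ℂ] A) | ∃ (x : B) (a b c : A),
        w = (D.ιB x).L a ⊗ₜ[ℂ] (b ⊗ₜ[ℂ] c) - a ⊗ₜ[ℂ] ((D.ιC (D.SB x)).L b ⊗ₜ[ℂ] c)} ∪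
     {w : A ⊗[ℂ] (A ⊗[ℂ] A) | ∃ (x : B) (a b c : A),
        w = a ⊗ₜ[ℂ] ((D.ιB x).L b ⊗ₜ[ℂ] c) - a ⊗ₜ[ℂ] (b ⊗ₜ[ℂ] (D.ιC (D.SB x)).L c)})

/-- (L6). -/
def cL6 (D : MBgdData A B C) : Prop :=
  ∀ (a b c : A) (u p : A ⊗[ℂ] A), u - D.Tr (b ⊗ₜ[ℂ] c) ∈ D.relbar →
    p - D.Tl (a ⊗ₜ[ℂ] b) ∈ D.relbar →
    (TensorProduct.assoc ℂ A A A)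
        (TensorProduct.map (D.Tl ∘ₗ tmulL a) LinearMap.id u) -
      TensorProduct.map LinearMap.id (D.Tr ∘ₗ tmulR c) p ∈ D.span₃L

/-- (R1). -/
def cR1 (D : MBgdData A B C) : Prop :=
  (∀ (a b : A) (z w y y' : C),
      D.lT ((D.ιB (D.SC z)).R a ⊗ₜ[ℂ]
          ((D.ιB (D.SC y')).R ((D.ιC y).R ((D.ιB (D.SC w)).L b)))) -
        TensorProduct.map (D.ιC y).R (D.ιB (D.SC y')).R
          (TensorProduct.map LinearMap.id ((D.ιC z).L ∘ₗ (D.ιB (D.SC w)).L)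
            (D.lT (a ⊗ₜ[ℂ] b))) ∈ D.relund) ∧
  (∀ (a b : A) (z w y y' : C),
      D.rT (((D.ιB (D.SC y')).R ((D.ιC y).R ((D.ιC w).L a))) ⊗ₜ[ℂ] ((D.ιC z).R b)) -
        TensorProduct.map (D.ιC y).R (D.ιB (D.SC y')).R
          (TensorProduct.map ((D.ιC w).L ∘ₗ (D.ιB (D.SC z)).L) LinearMap.id
            (D.rT (a ⊗ₜ[ℂ] b))) ∈ D.relund)

/-- (R3). -/
def cR3 (D : MBgdData A B C) : Prop :=
  ∀ (a b c : A) (u u' : A ⊗[ℂ] A), u - D.lT (a ⊗ₜ[ℂ] b) ∈ D.relund →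
    u' - D.rT (b ⊗ₜ[ℂ] c) ∈ D.relund →
    lmul₂ c u - lmul₁ a u' ∈ D.relund

/-- (R4). -/
def cR4 (D : MBgdData A B C) : Prop :=
  (∀ a b c : A, D.lT ((a * b) ⊗ₜ[ℂ] c) - lmul₁ a (D.lT (b ⊗ₜ[ℂ] c)) ∈ D.relund) ∧
  (∀ a b c : A, D.rT (a ⊗ₜ[ℂ] (c * b)) - lmul₂ c (D.rT (a ⊗ₜ[ℂ] b)) ∈ D.relund)

/-- (R5). -/
def cR5 (D : MBgdData A B C) : Prop :=
  (∀ (a b c : A) (u : A ⊗[ℂ] A), u - D.lT (a ⊗ₜ[ℂ] b) ∈ D.relund →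
      D.lT (a ⊗ₜ[ℂ] (b * c)) -
        mulIn23' (TensorProduct.map (D.lT ∘ₗ tmulR c) LinearMap.id u) ∈ D.relund) ∧
  (∀ (a b c : A) (u : A ⊗[ℂ] A), u - D.rT (a ⊗ₜ[ℂ] c) ∈ D.relund →
      D.rT ((a * b) ⊗ₜ[ℂ] c) -
        mulIn1' (TensorProduct.map LinearMap.id (D.rT ∘ₗ tmulL b) u) ∈ D.relund)

/-- The relation for the triple balanced tensor product appearing in (R6). -/
def span₃R (D : MBgdData A B C) : Submodule ℂ (A ⊗[ℂ] (A ⊗[ℂ] A)) :=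
  Submodule.span ℂ
    ({w : A ⊗[ℂ] (A ⊗[ℂ] A) | ∃ (y : C) (a b c : A),
        w = (D.ιB (D.SC y)).R a ⊗ₜ[ℂ] (b ⊗ₜ[ℂ] c) - a ⊗ₜ[ℂ] ((D.ιC y).R b ⊗ₜ[ℂ] c)} ∪
     {w : A ⊗[ℂ] (A ⊗[ℂ] A) | ∃ (y : C) (a b c : A),
        w = a ⊗ₜ[ℂ] ((D.ιB (D.SC y)).R b ⊗ₜ[ℂ] c) - a ⊗ₜ[ℂ] (b ⊗ₜ[ℂ] (D.ιC y).R c)})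

/-- (R6). -/
def cR6 (D : MBgdData A B C) : Prop :=
  ∀ (a b c : A) (u p : A ⊗[ℂ] A), u - D.rT (b ⊗ₜ[ℂ] c) ∈ D.relund →
    p - D.lT (a ⊗ₜ[ℂ] b) ∈ D.relund →
    (TensorProduct.assoc ℂ A A A)
        (TensorProduct.map (D.lT ∘ₗ tmulL a) LinearMap.id u) -
      TensorProduct.map LinearMap.id (D.rT ∘ₗ tmulR c) p ∈ D.span₃R

/-- The relation for the triple balanced tensor product appearing in (M1). -/
def span₃M1 (D : MBgdData A B C) : Submodule ℂ (A ⊗[ℂ] (A ⊗[ℂ] A)) :=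
  Submodule.span ℂ
    ({w : A ⊗[ℂ] (A ⊗[ℂ] A) | ∃ (y : C) (a b c : A),
        w = (D.ιB (D.SC y)).R a ⊗ₜ[ℂ] (b ⊗ₜ[ℂ] c) - a ⊗ₜ[ℂ] ((D.ιC y).R b ⊗ₜ[ℂ] c)} ∪
     {w : A ⊗[ℂ] (A ⊗[ℂ] A) | ∃ (x : B) (a b c : A),
        w = a ⊗ₜ[ℂ] ((D.ιB x).L b ⊗ₜ[ℂ] c) - a ⊗ₜ[ℂ] (b ⊗ₜ[ℂ] (D.ιC (D.SB x)).L c)})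

/-- (M1). -/
def cM1 (D : MBgdData A B C) : Prop :=
  ∀ (a b c : A) (u p : A ⊗[ℂ] A), u - D.Tr (b ⊗ₜ[ℂ] c) ∈ D.relbar →
    p - D.lT (a ⊗ₜ[ℂ] b) ∈ D.relund →
    (TensorProduct.assoc ℂ A A A)
        (TensorProduct.map (D.lT ∘ₗ tmulL a) LinearMap.id u) -
      TensorProduct.map LinearMap.id (D.Tr ∘ₗ tmulR c) p ∈ D.span₃M1

/-- The relation for the triple balanced tensor product appearing in (M2). -/
def span₃M2 (D : MBgdData A B C) : Submodule ℂ (A ⊗[ℂ] (A ⊗[ℂ] A)) :=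
  Submodule.span ℂ
    ({w : A ⊗[ℂ] (A ⊗[ℂ] A) | ∃ (x : B) (a b c : A),
        w = (D.ιB x).L a ⊗ₜ[ℂ] (b ⊗ₜ[ℂ] c) - a ⊗ₜ[ℂ] ((D.ιC (D.SB x)).L b ⊗ₜ[ℂ] c)} ∪
     {w : A ⊗[ℂ] (A ⊗[ℂ] A) | ∃ (y : C) (a b c : A),
        w = a ⊗ₜ[ℂ] ((D.ιB (D.SC y)).R b ⊗ₜ[ℂ] c) - a ⊗ₜ[ℂ] (b ⊗ₜ[ℂ] (D.ιC y).R c)})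

/-- (M2). -/
def cM2 (D : MBgdData A B C) : Prop :=
  ∀ (a b c : A) (u p : A ⊗[ℂ] A), u - D.rT (b ⊗ₜ[ℂ] c) ∈ D.relund →
    p - D.Tl (a ⊗ₜ[ℂ] b) ∈ D.relbar →
    (TensorProduct.assoc ℂ A A A)
        (TensorProduct.map (D.Tl ∘ₗ tmulL a) LinearMap.id u) -
      TensorProduct.map LinearMap.id (D.rT ∘ₗ tmulR c) p ∈ D.span₃M2

/-- `𝒜` is a multiplier bialgebroid. -/
def IsMBialgebroid (D : MBgdData A B C) : Prop :=
  D.ndbar ∧ D.ndund ∧ D.cL1 ∧ D.cL2 ∧ D.cL3 ∧ D.cL4 ∧ D.cL5 ∧ D.cL6 ∧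
    D.cR1 ∧ D.cR3 ∧ D.cR4 ∧ D.cR5 ∧ D.cR6 ∧ D.cM1 ∧ D.cM2

/-- The domain relation of the canonical map `Tλ`: span of `S_B(x)a ⊗ b − a ⊗ bS_B(x)`. -/
def relTlam (D : MBgdData A B C) : Submodule ℂ (A ⊗[ℂ] A) :=
  Submodule.span ℂ {z : A ⊗[ℂ] A | ∃ (x : B) (a b : A),
    z = (D.ιC (D.SB x)).L a ⊗ₜ[ℂ] b - a ⊗ₜ[ℂ] (D.ιC (D.SB x)).R b}

/-- The domain relation of the canonical map `Tρ`: span of `ax ⊗ b − a ⊗ xb`. -/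
def relTrho (D : MBgdData A B C) : Submodule ℂ (A ⊗[ℂ] A) :=
  Submodule.span ℂ {z : A ⊗[ℂ] A | ∃ (x : B) (a b : A),
    z = (D.ιB x).R a ⊗ₜ[ℂ] b - a ⊗ₜ[ℂ] (D.ιB x).L b}

/-- The domain relation of the canonical map `λT`: span of `ay ⊗ b − a ⊗ yb`. -/
def rellT (D : MBgdData A B C) : Submodule ℂ (A ⊗[ℂ] A) :=
  Submodule.span ℂ {z : A ⊗[ℂ] A | ∃ (y : C) (a b : A),
    z = (D.ιC y).R a ⊗ₜ[ℂ] b - a ⊗ₜ[ℂ] (D.ιC y).L b}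

/-- The domain relation of the canonical map `ρT`: span of `S_C(y)a ⊗ b − a ⊗ bS_C(y)`. -/
def relrT (D : MBgdData A B C) : Submodule ℂ (A ⊗[ℂ] A) :=
  Submodule.span ℂ {z : A ⊗[ℂ] A | ∃ (y : C) (a b : A),
    z = (D.ιB (D.SC y)).L a ⊗ₜ[ℂ] b - a ⊗ₜ[ℂ] (D.ιB (D.SC y)).R b}

/-- Bijectivity of the four canonical maps `Tλ, Tρ, λT, ρT`, formulated via
representatives. -/
def canonicalBij (D : MBgdData A B C) : Prop :=
  (∀ u : A ⊗[ℂ] A, D.Tl u ∈ D.relbar → u ∈ D.relTlam) ∧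
  (∀ w : A ⊗[ℂ] A, ∃ u : A ⊗[ℂ] A, D.Tl u - w ∈ D.relbar) ∧
  (∀ u : A ⊗[ℂ] A, D.Tr u ∈ D.relbar → u ∈ D.relTrho) ∧
  (∀ w : A ⊗[ℂ] A, ∃ u : A ⊗[ℂ] A, D.Tr u - w ∈ D.relbar) ∧
  (∀ u : A ⊗[ℂ] A, D.lT u ∈ D.relund → u ∈ D.rellT) ∧
  (∀ w : A ⊗[ℂ] A, ∃ u : A ⊗[ℂ] A, D.lT u - w ∈ D.relund) ∧
  (∀ u : A ⊗[ℂ] A, D.rT u ∈ D.relund → u ∈ D.relrT) ∧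
  (∀ w : A ⊗[ℂ] A, ∃ u : A ⊗[ℂ] A, D.rT u - w ∈ D.relund)

/-- The ideal `I₁ ⊆ B`. -/
def I₁ (D : MBgdData A B C) : Submodule ℂ B :=
  Submodule.span ℂ {z : B | ∃ ω : A →ₗ[ℂ] B,
    (∀ (x : B) (a : A), ω ((D.ιB x).L a) = x * ω a) ∧ ∃ a, z = ω a}

/-- The ideal `I₂ ⊆ B`. -/
def I₂ (D : MBgdData A B C) : Submodule ℂ B :=
  Submodule.span ℂ {z : B | ∃ ω : A →ₗ[ℂ] B,
    (∀ (x : B) (a : A), ω ((D.ιC (D.SB x)).L a) = ω a * x) ∧ ∃ a, z = ω a}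

/-- The ideal `I₃ ⊆ C`. -/
def I₃ (D : MBgdData A B C) : Submodule ℂ C :=
  Submodule.span ℂ {z : C | ∃ ω : A →ₗ[ℂ] C,
    (∀ (y : C) (a : A), ω ((D.ιC y).R a) = ω a * y) ∧ ∃ a, z = ω a}

/-- The ideal `I₄ ⊆ C`. -/
def I₄ (D : MBgdData A B C) : Submodule ℂ C :=
  Submodule.span ℂ {z : C | ∃ ω : A →ₗ[ℂ] C,
    (∀ (y : C) (a : A), ω ((D.ιB (D.SC y)).R a) = y * ω a) ∧ ∃ a, z = ω a}

/-- The fullness conditions: the spans of `S_B(I₁)A`, `I₂A`, `AS_C(I₃)` and `AI₄`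
equal `A`. -/
def fullSpans (D : MBgdData A B C) : Prop :=
  Submodule.span ℂ {z : A | ∃ i ∈ D.I₁, ∃ a : A, z = (D.ιC (D.SB i)).L a} = ⊤ ∧
  Submodule.span ℂ {z : A | ∃ i ∈ D.I₂, ∃ a : A, z = (D.ιB i).L a} = ⊤ ∧
  Submodule.span ℂ {z : A | ∃ i ∈ D.I₃, ∃ a : A, z = (D.ιB (D.SC i)).R a} = ⊤ ∧
  Submodule.span ℂ {z : A | ∃ i ∈ D.I₄, ∃ a : A, z = (D.ιC i).R a} = ⊤

/-- `𝒜` is a regular multiplier Hopf algebroid. -/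
def IsRegular (D : MBgdData A B C) : Prop :=
  D.fullSpans ∧ D.canonicalBij

/-- A left counit. -/
def IsLeftCounit (D : MBgdData A B C) (εB : A →ₗ[ℂ] B) : Prop :=
  (∀ (x : B) (a : A), εB ((D.ιB x).L a) = x * εB a) ∧
  (∀ (x : B) (a : A), εB ((D.ιC (D.SB x)).L a) = εB a * x) ∧
  (∀ (a b : A) (n : ℕ) (uu vv : Fin n → A),
      (∑ j, uu j ⊗ₜ[ℂ] vv j) - D.Tr (a ⊗ₜ[ℂ] b) ∈ D.relbar →
      ∑ j, (D.ιC (D.SB (εB (uu j)))).L (vv j) = a * b) ∧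
  (∀ (a b : A) (n : ℕ) (uu vv : Fin n → A),
      (∑ j, uu j ⊗ₜ[ℂ] vv j) - D.Tl (a ⊗ₜ[ℂ] b) ∈ D.relbar →
      ∑ j, (D.ιB (εB (vv j))).L (uu j) = a * b)

/-- A right counit. -/
def IsRightCounit (D : MBgdData A B C) (εC : A →ₗ[ℂ] C) : Prop :=
  (∀ (y : C) (a : A), εC ((D.ιC y).R a) = εC a * y) ∧
  (∀ (y : C) (a : A), εC ((D.ιB (D.SC y)).R a) = y * εC a) ∧
  (∀ (a b : A) (n : ℕ) (uu vv : Fin n → A),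
      (∑ j, uu j ⊗ₜ[ℂ] vv j) - D.rT (a ⊗ₜ[ℂ] b) ∈ D.relund →
      ∑ j, (D.ιC (εC (uu j))).R (vv j) = b * a) ∧
  (∀ (a b : A) (n : ℕ) (uu vv : Fin n → A),
      (∑ j, uu j ⊗ₜ[ℂ] vv j) - D.lT (a ⊗ₜ[ℂ] b) ∈ D.relund →
      ∑ j, (D.ιB (D.SC (εC (vv j)))).R (uu j) = a * b)

/-- `S` is an invertible antipode with witnessing left counit `εB` and right
counit `εC`. -/
def IsAntipodeWith (D : MBgdData A B C) (S : A ≃ₗ[ℂ] A)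
    (εB : A →ₗ[ℂ] B) (εC : A →ₗ[ℂ] C) : Prop :=
  (∀ a b : A, S (a * b) = S b * S a) ∧
  (∀ (a : A) (x x' : B) (y y' : C),
      S ((D.ιB x).L ((D.ιC y).L ((D.ιC y').R ((D.ιB x').R a)))) =
        (D.ιC (D.SB x)).R ((D.ιB (D.SC y)).R
          ((D.ιB (D.SC y')).L ((D.ιC (D.SB x')).L (S a))))) ∧
  D.IsLeftCounit εB ∧ D.IsRightCounit εC ∧
  (∀ (a b : A) (n : ℕ) (uu vv : Fin n → A),
      (∑ j, uu j ⊗ₜ[ℂ] vv j) - D.Tr (a ⊗ₜ[ℂ] b) ∈ D.relbar →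
      ∑ j, S (uu j) * vv j = (D.ιB (D.SC (εC a))).L b) ∧
  (∀ (a b : A) (n : ℕ) (uu vv : Fin n → A),
      (∑ j, uu j ⊗ₜ[ℂ] vv j) - D.lT (a ⊗ₜ[ℂ] b) ∈ D.relund →
      ∑ j, uu j * S (vv j) = (D.ιC (D.SB (εB b))).R a)

/-- `S` is an invertible antipode. -/
def IsAntipode (D : MBgdData A B C) (S : A ≃ₗ[ℂ] A) : Prop :=
  ∃ (εB : A →ₗ[ℂ] B) (εC : A →ₗ[ℂ] C), D.IsAntipodeWith S εB εC

end MBgdData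


section Star17

variable {A B C : Type*}
  [NonUnitalRing A] [Module ℂ A] [SMulCommClass ℂ A A] [IsScalarTower ℂ A A]
  [StarRing A] [StarModule ℂ A]
  [NonUnitalRing B] [Module ℂ B] [SMulCommClass ℂ B B] [IsScalarTower ℂ B B]
  [NonUnitalRing C] [Module ℂ C] [SMulCommClass ℂ C C] [IsScalarTower ℂ C C]


-- ———— Auxiliary lemmas ————

private lemma exists_fin_sum {M N : Type*} [AddCommMonoid M] [AddCommMonoid N]
    [Module ℂ M] [Module ℂ N] (x : M ⊗[ℂ] N) :
    ∃ (n : ℕ) (u : Fin n → M) (v : Fin n → N), x = ∑ j, u j ⊗ₜ[ℂ] v j := by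
  induction x with
  | zero => exact ⟨0, ![], ![], by simp⟩
  | tmul a b => exact ⟨1, ![a], ![b], by simp⟩
  | add x y hx hy =>
    obtain ⟨n, u, v, rfl⟩ := hx
    obtain ⟨m, u', v', rfl⟩ := hy
    refine ⟨n + m, Fin.addCases u u', Fin.addCases v v', ?_⟩
    rw [Fin.sum_univ_add]
    simp

private lemma forall_eq_zero_of_span {M N : Type*} [AddCommMonoid M] [AddCommMonoid N]
    [Module ℂ M] [Module ℂ N] {S : Set M} (hsp : Submodule.span ℂ S = ⊤)
    (F : M →ₗ[ℂ] N) (h : ∀ z ∈ S, F z = 0) : ∀ a, F a = 0 := by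
  have hle : Submodule.span ℂ S ≤ LinearMap.ker F :=
    Submodule.span_le.2 fun z hz => LinearMap.mem_ker.2 (h z hz)
  rw [hsp] at hle
  exact fun a => LinearMap.mem_ker.1 (hle Submodule.mem_top)

/-- on a multiplier Hopf `*`-algebroid, the counits and the antipode are
compatible with the involution: `ε_C(a*) = (S_B(ε_B(a)))*`, `ε_B(a*) = (S_C(ε_C(a)))*`
and `S((S(a*))*) = a`. -/
theorem stmt17 (D : MBgdData A B C) (hD : D.IsMBialgebroid) (hreg : D.IsRegular)
    (starB : B → B) (starC : C → C)
    (hstarB : ∀ (x : B) (a : A),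
      (D.ιB (starB x)).L a = star ((D.ιB x).R (star a)) ∧
      (D.ιB (starB x)).R a = star ((D.ιB x).L (star a)))
    (hstarC : ∀ (y : C) (a : A),
      (D.ιC (starC y)).L a = star ((D.ιC y).R (star a)) ∧
      (D.ιC (starC y)).R a = star ((D.ιC y).L (star a)))
    (hSBSC : ∀ y : C, D.SB (starB (D.SC (starC y))) = y)
    (hSCSB : ∀ x : B, D.SC (starC (D.SB (starB x))) = x)
    (hstarTl : ∀ (a b : A) (n : ℕ) (uu vv : Fin n → A),
      (∑ j, uu j ⊗ₜ[ℂ] vv j) - D.Tl (a ⊗ₜ[ℂ] b) ∈ D.relbar →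
      D.lT (star a ⊗ₜ[ℂ] star b) - (∑ j, star (uu j) ⊗ₜ[ℂ] star (vv j)) ∈ D.relund)
    (hstarTr : ∀ (a b : A) (n : ℕ) (uu vv : Fin n → A),
      (∑ j, uu j ⊗ₜ[ℂ] vv j) - D.Tr (a ⊗ₜ[ℂ] b) ∈ D.relbar →
      D.rT (star a ⊗ₜ[ℂ] star b) - (∑ j, star (uu j) ⊗ₜ[ℂ] star (vv j)) ∈ D.relund)
    (εB : A →ₗ[ℂ] B) (hεB : D.IsLeftCounit εB)
    (εC : A →ₗ[ℂ] C) (hεC : D.IsRightCounit εC)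
    (S : A ≃ₗ[ℂ] A) (hS : D.IsAntipode S) :
    ∀ a : A, εC (star a) = starC (D.SB (εB a)) ∧
      εB (star a) = starB (D.SC (εC a)) ∧
      S (star (S (star a))) = a := by
  classical
  obtain ⟨hfull, hTlinj, hTlsurj, hTrinj, hTrsurj, hlTinj, hlTsurj, hrTinj, hrTsurj⟩ := hreg
  obtain ⟨hndbar, hndund, hL1, hL2, hL3, hrest⟩ := hD
  -- star/action lemmas
  have sB_L : ∀ (x : B) (a : A), star ((D.ιB x).L a) = (D.ιB (starB x)).R (star a) := by
    intro x a
    have := (hstarB x (star a)).2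
    rw [star_star] at this
    exact this.symm
  have sB_R : ∀ (x : B) (a : A), star ((D.ιB x).R a) = (D.ιB (starB x)).L (star a) := by
    intro x a
    have := (hstarB x (star a)).1
    rw [star_star] at this
    exact this.symm
  have sC_L : ∀ (y : C) (a : A), star ((D.ιC y).L a) = (D.ιC (starC y)).R (star a) := by
    intro y a
    have := (hstarC y (star a)).2
    rw [star_star] at this
    exact this.symm
  have sC_R : ∀ (y : C) (a : A), star ((D.ιC y).R a) = (D.ιC (starC y)).L (star a) := by
    intro y a
    have := (hstarC y (star a)).1
    rw [star_star] at this
    exact this.symm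
  -- additive action lemmas
  have ιB_L_add : ∀ (x y : B) (a : A), (D.ιB (x + y)).L a = (D.ιB x).L a + (D.ιB y).L a := by
    intro x y a; rw [D.ιB_add]; rfl
  have ιB_L_smul : ∀ (c : ℂ) (x : B) (a : A), (D.ιB (c • x)).L a = c • (D.ιB x).L a := by
    intro c x a; rw [D.ιB_smul]; rfl
  have ιC_L_add : ∀ (x y : C) (a : A), (D.ιC (x + y)).L a = (D.ιC x).L a + (D.ιC y).L a := by
    intro x y a; rw [D.ιC_add]; rfl
  have ιC_L_smul : ∀ (c : ℂ) (x : C) (a : A), (D.ιC (c • x)).L a = c • (D.ιC x).L a := by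
    intro c x a; rw [D.ιC_smul]; rfl
  have ιB_L_sub : ∀ (x y : B) (a : A), (D.ιB (x - y)).L a = (D.ιB x).L a - (D.ιB y).L a := by
    intro x y a
    have hxy : x - y = x + (-1 : ℂ) • y := by rw [neg_one_smul, sub_eq_add_neg]
    rw [hxy, ιB_L_add, ιB_L_smul, neg_one_smul, sub_eq_add_neg]
  have ιC_L_sub : ∀ (x y : C) (a : A), (D.ιC (x - y)).L a = (D.ιC x).L a - (D.ιC y).L a := by
    intro x y a
    have hxy : x - y = x + (-1 : ℂ) • y := by rw [neg_one_smul, sub_eq_add_neg]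
    rw [hxy, ιC_L_add, ιC_L_smul, neg_one_smul, sub_eq_add_neg]
  have eqB : ∀ x y : B, (∀ a, (D.ιB x).L a = (D.ιB y).L a) → x = y := by
    intro x y h
    have h0 : ∀ a, (D.ιB (x - y)).L a = 0 := fun a => by rw [ιB_L_sub, h a, sub_self]
    exact sub_eq_zero.1 (D.B_ndl _ h0)
  have eqC : ∀ x y : C, (∀ a, (D.ιC x).L a = (D.ιC y).L a) → x = y := by
    intro x y h
    have h0 : ∀ a, (D.ιC (x - y)).L a = 0 := fun a => by rw [ιC_L_sub, h a, sub_self]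
    exact sub_eq_zero.1 (D.C_ndl _ h0)
  -- multiplication action lemmas
  have mulB_L : ∀ (x y : B) (a : A), (D.ιB (x * y)).L a = (D.ιB x).L ((D.ιB y).L a) := by
    intro x y a; rw [D.ιB_mul]; rfl
  have mulC_L : ∀ (x y : C) (a : A), (D.ιC (x * y)).L a = (D.ιC x).L ((D.ιC y).L a) := by
    intro x y a; rw [D.ιC_mul]; rfl
  have mulB_R : ∀ (x y : B) (a : A), (D.ιB (x * y)).R a = (D.ιB y).R ((D.ιB x).R a) := by
    intro x y a; rw [D.ιB_mul]; rfl
  have mulC_R : ∀ (x y : C) (a : A), (D.ιC (x * y)).R a = (D.ιC y).R ((D.ιC x).R a) := by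
    intro x y a; rw [D.ιC_mul]; rfl
  have commLL : ∀ (x : B) (y : C) (a : A),
      (D.ιB x).L ((D.ιC y).L a) = (D.ιC y).L ((D.ιB x).L a) := by
    intro x y a
    have h := congrArg Mult.L (D.bc_comm x y)
    exact DFunLike.congr_fun h a
  -- star is involutive / antimultiplicative / conjugate linear on B, C
  have starB_invol : ∀ x : B, starB (starB x) = x := by
    intro x
    refine eqB _ _ fun a => ?_
    rw [(hstarB (starB x) a).1, (hstarB x (star a)).2, star_star, star_star]
  have starC_invol : ∀ y : C, starC (starC y) = y := by
    intro y
    refine eqC _ _ fun a => ?_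
    rw [(hstarC (starC y) a).1, (hstarC y (star a)).2, star_star, star_star]
  have starB_mul : ∀ x y : B, starB (x * y) = starB y * starB x := by
    intro x y
    refine eqB _ _ fun a => ?_
    rw [(hstarB (x * y) a).1, mulB_R, mulB_L, (hstarB y _).1, (hstarB x _).1, star_star]
  have starC_mul : ∀ x y : C, starC (x * y) = starC y * starC x := by
    intro x y
    refine eqC _ _ fun a => ?_
    rw [(hstarC (x * y) a).1, mulC_R, mulC_L, (hstarC y _).1, (hstarC x _).1, star_star]
  have starB_add : ∀ x y : B, starB (x + y) = starB x + starB y := by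
    intro x y
    refine eqB _ _ fun a => ?_
    have hR : (D.ιB (x + y)).R (star a) = (D.ιB x).R (star a) + (D.ιB y).R (star a) := by
      rw [D.ιB_add]; rfl
    rw [ιB_L_add, (hstarB (x + y) a).1, (hstarB x a).1, (hstarB y a).1, hR, star_add]
  have starC_add : ∀ x y : C, starC (x + y) = starC x + starC y := by
    intro x y
    refine eqC _ _ fun a => ?_
    have hR : (D.ιC (x + y)).R (star a) = (D.ιC x).R (star a) + (D.ιC y).R (star a) := by
      rw [D.ιC_add]; rfl
    rw [ιC_L_add, (hstarC (x + y) a).1, (hstarC x a).1, (hstarC y a).1, hR, star_add]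
  have starB_smul : ∀ (c : ℂ) (x : B), starB (c • x) = star c • starB x := by
    intro c x
    refine eqB _ _ fun a => ?_
    have hR : (D.ιB (c • x)).R (star a) = c • (D.ιB x).R (star a) := by
      rw [D.ιB_smul]; rfl
    rw [ιB_L_smul, (hstarB (c • x) a).1, (hstarB x a).1, hR, star_smul]
  have starC_smul : ∀ (c : ℂ) (x : C), starC (c • x) = star c • starC x := by
    intro c x
    refine eqC _ _ fun a => ?_
    have hR : (D.ιC (c • x)).R (star a) = c • (D.ιC x).R (star a) := by
      rw [D.ιC_smul]; rfl
    rw [ιC_L_smul, (hstarC (c • x) a).1, (hstarC x a).1, hR, star_smul]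
  -- S_B / S_C star compatibilities
  have SC_starC_SB : ∀ x : B, D.SC (starC (D.SB x)) = starB x := by
    intro x
    have := hSCSB (starB x)
    rwa [starB_invol] at this
  have SB_starB_SC : ∀ y : C, D.SB (starB (D.SC y)) = starC y := by
    intro y
    have := hSBSC (starC y)
    rwa [starC_invol] at this
  have starB_SC_starC_SB : ∀ x : B, starB (D.SC (starC (D.SB x))) = x := by
    intro x
    rw [SC_starC_SB, starB_invol]
  -- the fundamental counit comparison
  have H1 : ∀ (e : A →ₗ[ℂ] B) (f : A →ₗ[ℂ] C), D.IsLeftCounit e → D.IsRightCounit f →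
      ∀ a : A, D.SB (e a) = starC (f (star a)) := by
    intro e f he hf
    -- conjugate-linear composite as a linear map
    set g : A →ₗ[ℂ] C :=
      { toFun := fun a => starC (f (star a))
        map_add' := fun a b => by simp only [star_add, map_add, starC_add]
        map_smul' := fun c a => by
          simp only [star_smul, map_smul, starC_smul, star_star, RingHom.id_apply] } with hg
    have hga : ∀ a, g a = starC (f (star a)) := fun a => rfl
    set δ : A →ₗ[ℂ] C := D.SB ∘ₗ e - g with hδdef
    have hδa : ∀ a, δ a = D.SB (e a) - g a := fun a => rfl
    set Φ : A ⊗[ℂ] A →ₗ[ℂ] A := TensorProduct.lift (LinearMap.mk₂ ℂ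
      (fun u v => (D.ιC (δ u)).L v)
      (fun u u' v => by simp only [map_add, ιC_L_add])
      (fun c u v => by simp only [map_smul, ιC_L_smul])
      (fun u v v' => by simp only [map_add])
      (fun c u v => by simp only [map_smul])) with hΦdef
    have hΦ : ∀ u v, Φ (u ⊗ₜ[ℂ] v) = (D.ιC (δ u)).L v := fun u v => rfl
    -- δ is B-linear in the appropriate sense
    have hδB : ∀ (x : B) (a : A), δ ((D.ιB x).L a) = δ a * D.SB x := by
      intro x a
      have h1 : D.SB (e ((D.ιB x).L a)) = D.SB (e a) * D.SB x := by
        rw [he.1, D.SB_antimul]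
      have h2 : g ((D.ιB x).L a) = g a * D.SB x := by
        rw [hga, sB_L, ← SC_starC_SB x, hf.2.1, starC_mul, starC_invol, hga]
      rw [hδa, hδa, h1, h2, sub_mul]
    -- Φ vanishes on relbar
    have hΦrel : ∀ r ∈ D.relbar, Φ r = 0 := by
      intro r hr
      have hle : D.relbar ≤ LinearMap.ker Φ := by
        refine Submodule.span_le.2 ?_
        rintro z ⟨x, a', b', rfl⟩
        simp only [SetLike.mem_coe, LinearMap.mem_ker, map_sub, hΦ]
        rw [hδB, mulC_L, sub_self]
      exact LinearMap.mem_ker.1 (hle hr)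
    -- Φ vanishes on the range of Tr
    have hΦTr : ∀ a' b' : A, Φ (D.Tr (a' ⊗ₜ[ℂ] b')) = 0 := by
      intro a' b'
      obtain ⟨n, uu, vv, hw⟩ := exists_fin_sum (D.Tr (a' ⊗ₜ[ℂ] b'))
      have hrep : (∑ j, uu j ⊗ₜ[ℂ] vv j) - D.Tr (a' ⊗ₜ[ℂ] b') ∈ D.relbar := by
        rw [← hw, sub_self]; exact zero_mem _
      have h1 := he.2.2.1 a' b' n uu vv hrep
      have hrep' : (∑ j, star (uu j) ⊗ₜ[ℂ] star (vv j)) - D.rT (star a' ⊗ₜ[ℂ] star b') ∈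
          D.relund := by
        have h := hstarTr a' b' n uu vv hrep
        have := neg_mem h
        rwa [neg_sub] at this
      have h2 := hf.2.2.1 (star a') (star b') n _ _ hrep'
      have h2' : ∑ j, (D.ιC (starC (f (star (uu j))))).L (vv j) = a' * b' := by
        have hst := congrArg star h2
        rw [star_sum, star_mul, star_star, star_star] at hst
        calc ∑ j, (D.ιC (starC (f (star (uu j))))).L (vv j)
            = ∑ j, star ((D.ιC (f (star (uu j)))).R (star (vv j))) := by
              refine Finset.sum_congr rfl fun j _ => ?_
              rw [sC_R, star_star]
          _ = a' * b' := hst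
      rw [hw, map_sum]
      have hterm : ∀ j, Φ (uu j ⊗ₜ[ℂ] vv j) =
          (D.ιC (D.SB (e (uu j)))).L (vv j) - (D.ιC (starC (f (star (uu j))))).L (vv j) := by
        intro j
        rw [hΦ, hδa, ιC_L_sub, hga]
      rw [Finset.sum_congr rfl fun j _ => hterm j, Finset.sum_sub_distrib, h1, h2', sub_self]
    -- hence Φ vanishes everywhere
    have hcomp : Φ ∘ₗ D.Tr = 0 := TensorProduct.ext' fun a' b' => by
      simpa using hΦTr a' b'
    have hzero : ∀ w, Φ w = 0 := by
      intro w
      obtain ⟨u, hu⟩ := hTrsurj w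
      have h0 := hΦrel _ hu
      have hTu : Φ (D.Tr u) = 0 := by
        have := DFunLike.congr_fun hcomp u
        simpa using this
      rw [map_sub, hTu, zero_sub, neg_eq_zero] at h0
      exact h0
    intro a
    have hδ0 : δ a = 0 := by
      refine D.C_ndl _ fun b => ?_
      have := hzero (a ⊗ₜ[ℂ] b)
      rwa [hΦ] at this
    have := hδa a
    rw [hδ0, hga] at this
    exact (sub_eq_zero.1 this.symm)
  -- antipode part
  obtain ⟨eB', eC', hSmul, hSmlt, heB', heC', hA1, hA2⟩ := hS
  have h1' := H1 eB' eC' heB' heC'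
  -- (★): the starred antipode identity for Tl
  have hstar2 : ∀ (a b : A) (n : ℕ) (uu vv : Fin n → A),
      (∑ j, uu j ⊗ₜ[ℂ] vv j) - D.Tl (a ⊗ₜ[ℂ] b) ∈ D.relbar →
      ∑ j, star (S (star (vv j))) * uu j = (D.ιC (eC' b)).L a := by
    intro a b n uu vv hrep
    have hrep' : (∑ j, star (uu j) ⊗ₜ[ℂ] star (vv j)) - D.lT (star a ⊗ₜ[ℂ] star b) ∈
        D.relund := by
      have h := hstarTl a b n uu vv hrep
      have := neg_mem h
      rwa [neg_sub] at this
    have h := hA2 (star a) (star b) n _ _ hrep'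
    have hst := congrArg star h
    rw [star_sum, sC_R, star_star] at hst
    have hy : starC (D.SB (eB' (star b))) = eC' b := by
      have := h1' (star b)
      rw [star_star] at this
      rw [this, starC_invol]
    rw [hy] at hst
    calc ∑ j, star (S (star (vv j))) * uu j
        = ∑ j, star (star (uu j) * S (star (vv j))) := by
          refine Finset.sum_congr rfl fun j _ => ?_
          rw [star_mul, star_star]
      _ = (D.ιC (eC' b)).L a := hst
  -- the map u ⊗ v ↦ S u * v
  set ΦS : A ⊗[ℂ] A →ₗ[ℂ] A := TensorProduct.lift (LinearMap.mk₂ ℂ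
    (fun u v => S u * v)
    (fun u u' v => by simp only [map_add, add_mul])
    (fun c u v => by simp only [map_smul, smul_mul_assoc])
    (fun u v v' => by simp only [mul_add])
    (fun c u v => by simp only [mul_smul_comm])) with hΦSdef
  have hΦS : ∀ u v, ΦS (u ⊗ₜ[ℂ] v) = S u * v := fun u v => rfl
  have hΦSsum : ∀ (n : ℕ) (uu vv : Fin n → A),
      ΦS (∑ j, uu j ⊗ₜ[ℂ] vv j) = ∑ j, S (uu j) * vv j := by
    intro n uu vv
    rw [map_sum]
    exact Finset.sum_congr rfl fun j _ => hΦS _ _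
  have hΦSrel : ∀ r ∈ D.relbar, ΦS r = 0 := by
    intro r hr
    obtain ⟨n, uu, vv, hw⟩ := exists_fin_sum r
    have hrep : (∑ j, uu j ⊗ₜ[ℂ] vv j) - D.Tr ((0 : A) ⊗ₜ[ℂ] (0 : A)) ∈ D.relbar := by
      rw [TensorProduct.zero_tmul, map_zero, sub_zero, ← hw]; exact hr
    have h := hA1 0 0 n uu vv hrep
    rw [map_zero] at h
    rw [hw, hΦSsum, h]
  have hΦScongr : ∀ w w', w - w' ∈ D.relbar → ΦS w = ΦS w' := by
    intro w w' h
    have := hΦSrel _ h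
    rw [map_sub, sub_eq_zero] at this
    exact this
  have hΦSTr : ∀ a b : A, ΦS (D.Tr (a ⊗ₜ[ℂ] b)) = (D.ιB (D.SC (eC' a))).L b := by
    intro a b
    obtain ⟨n, uu, vv, hw⟩ := exists_fin_sum (D.Tr (a ⊗ₜ[ℂ] b))
    have hrep : (∑ j, uu j ⊗ₜ[ℂ] vv j) - D.Tr (a ⊗ₜ[ℂ] b) ∈ D.relbar := by
      rw [← hw, sub_self]; exact zero_mem _
    rw [hw, hΦSsum]
    exact hA1 a b n uu vv hrep
  -- rmul₁ / rmul₂ preserve relbar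
  have hrmul2 : ∀ (c : A) (w : A ⊗[ℂ] A), w ∈ D.relbar → rmul₂ c w ∈ D.relbar := by
    intro c w hw
    have hmap : Submodule.map (rmul₂ c) D.relbar ≤ D.relbar := by
      rw [MBgdData.relbar, Submodule.map_span]
      refine Submodule.span_le.2 ?_
      rintro z ⟨z', ⟨x, a, b, rfl⟩, rfl⟩
      refine Submodule.subset_span ⟨x, a, b * c, ?_⟩
      rw [map_sub]
      simp only [rmul₂, TensorProduct.map_tmul, LinearMap.mulRight_apply, LinearMap.id_coe,
        id_eq]
      rw [(D.ιC (D.SB x)).hL b c]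
    exact hmap ⟨w, hw, rfl⟩
  have hrmul1 : ∀ (c : A) (w : A ⊗[ℂ] A), w ∈ D.relbar → rmul₁ c w ∈ D.relbar := by
    intro c w hw
    have hmap : Submodule.map (rmul₁ c) D.relbar ≤ D.relbar := by
      rw [MBgdData.relbar, Submodule.map_span]
      refine Submodule.span_le.2 ?_
      rintro z ⟨z', ⟨x, a, b, rfl⟩, rfl⟩
      refine Submodule.subset_span ⟨x, a * c, b, ?_⟩
      rw [map_sub]
      simp only [rmul₁, TensorProduct.map_tmul, LinearMap.mulRight_apply, LinearMap.id_coe,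
        id_eq]
      rw [(D.ιB x).hL a c]
    exact hmap ⟨w, hw, rfl⟩
  have hΦSrmul1 : ∀ (a : A) (w : A ⊗[ℂ] A), ΦS (rmul₁ a w) = S a * ΦS w := by
    intro a w
    induction w with
    | zero => simp
    | tmul u v =>
      simp only [rmul₁, TensorProduct.map_tmul, LinearMap.mulRight_apply, LinearMap.id_coe,
        id_eq, hΦS]
      rw [hSmul, mul_assoc]
    | add x y hx hy => rw [map_add, map_add, map_add, mul_add, hx, hy]
  -- (I1)
  have hI1 : ∀ (a b c : A) (n : ℕ) (uu vv : Fin n → A),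
      (∑ j, uu j ⊗ₜ[ℂ] vv j) - D.Tl (a ⊗ₜ[ℂ] b) ∈ D.relbar →
      ∑ j, S (uu j) * (vv j * c) = S a * ((D.ιB (D.SC (eC' b))).L c) := by
    intro a b c n uu vv hrep
    have e1 : (∑ j, uu j ⊗ₜ[ℂ] (vv j * c)) = rmul₂ c (∑ j, uu j ⊗ₜ[ℂ] vv j) := by
      rw [map_sum]
      refine Finset.sum_congr rfl fun j _ => ?_
      simp only [rmul₂, TensorProduct.map_tmul, LinearMap.mulRight_apply, LinearMap.id_coe,
        id_eq]
    have m1 : rmul₂ c (∑ j, uu j ⊗ₜ[ℂ] vv j) - rmul₂ c (D.Tl (a ⊗ₜ[ℂ] b)) ∈ D.relbar := by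
      rw [← map_sub]; exact hrmul2 c _ hrep
    have m2 := hL3 a b c
    have m3 : (∑ j, uu j ⊗ₜ[ℂ] (vv j * c)) - rmul₁ a (D.Tr (b ⊗ₜ[ℂ] c)) ∈ D.relbar := by
      rw [e1]
      have := add_mem m1 m2
      rwa [sub_add_sub_cancel] at this
    have := hΦScongr _ _ m3
    rw [hΦSsum] at this
    rw [this, hΦSrmul1, hΦSTr]
  -- (∗∗): S ((ιC y).L a) * c = S a * ((ιB (SC y)).L c)
  have hss : ∀ (y : C) (c a : A), S ((D.ιC y).L a) * c = S a * ((D.ιB (D.SC y)).L c) := by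
    intro y c
    set F : A →ₗ[ℂ] A := (LinearMap.mulRight ℂ c) ∘ₗ (S : A →ₗ[ℂ] A) ∘ₗ (D.ιC y).L
        - (LinearMap.mulRight ℂ ((D.ιB (D.SC y)).L c)) ∘ₗ (S : A →ₗ[ℂ] A) with hFdef
    have hFa : ∀ a, F a = S ((D.ιC y).L a) * c - S a * ((D.ιB (D.SC y)).L c) := fun a => rfl
    suffices h : ∀ a, F a = 0 by
      intro a
      have := h a
      rw [hFa] at this
      exact sub_eq_zero.1 this
    have lvl4 : ∀ (x : B) (y₁ y' : C) (x' : B) (a₀ : A),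
        F ((D.ιB x).L ((D.ιC y₁).L ((D.ιC y').R ((D.ιB x').R a₀)))) = 0 := by
      intro x y₁ y' x' a₀
      rw [hFa, ← commLL x y, ← mulC_L y y₁, hSmlt a₀ x x' (y * y₁) y', hSmlt a₀ x x' y₁ y',
        D.SC_antimul y y₁, mulB_R]
      rw [(D.ιC (D.SB x)).hC ((D.ιB (D.SC y)).R ((D.ιB (D.SC y₁)).R
          ((D.ιB (D.SC y')).L ((D.ιC (D.SB x')).L (S a₀))))) c]
      rw [(D.ιB (D.SC y)).hC ((D.ιB (D.SC y₁)).R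
          ((D.ιB (D.SC y')).L ((D.ιC (D.SB x')).L (S a₀)))) ((D.ιC (D.SB x)).L c)]
      rw [(D.ιC (D.SB x)).hC ((D.ιB (D.SC y₁)).R
          ((D.ιB (D.SC y')).L ((D.ιC (D.SB x')).L (S a₀)))) ((D.ιB (D.SC y)).L c)]
      rw [commLL (D.SC y) (D.SB x) c, sub_self]
    have lvl3 : ∀ (x : B) (y₁ y' : C) (d : A),
        F ((D.ιB x).L ((D.ιC y₁).L ((D.ιC y').R d))) = 0 := by
      intro x y₁ y'
      refine forall_eq_zero_of_span D.AB_span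
        (F ∘ₗ (D.ιB x).L ∘ₗ (D.ιC y₁).L ∘ₗ (D.ιC y').R) ?_
      rintro z ⟨x', a₀, rfl⟩
      exact lvl4 x y₁ y' x' a₀
    have lvl2 : ∀ (x : B) (y₁ : C) (b : A), F ((D.ιB x).L ((D.ιC y₁).L b)) = 0 := by
      intro x y₁
      refine forall_eq_zero_of_span D.AC_span (F ∘ₗ (D.ιB x).L ∘ₗ (D.ιC y₁).L) ?_
      rintro z ⟨y', d, rfl⟩
      exact lvl3 x y₁ y' d
    have lvl1 : ∀ (x : B) (b : A), F ((D.ιB x).L b) = 0 := by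
      intro x
      refine forall_eq_zero_of_span D.CA_span (F ∘ₗ (D.ιB x).L) ?_
      rintro z ⟨y₁, b, rfl⟩
      exact lvl2 x y₁ b
    refine forall_eq_zero_of_span D.BA_span F ?_
    rintro z ⟨x, b, rfl⟩
    exact lvl1 x b
  -- inverse antipode identity for Tl
  have hsymm_mul : ∀ p q : A, S.symm (p * q) = S.symm q * S.symm p := by
    intro p q
    apply S.injective
    rw [LinearEquiv.apply_symm_apply, hSmul, LinearEquiv.apply_symm_apply,
      LinearEquiv.apply_symm_apply]
  have hTlInv : ∀ (a b : A) (n : ℕ) (uu vv : Fin n → A),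
      (∑ j, uu j ⊗ₜ[ℂ] vv j) - D.Tl (a ⊗ₜ[ℂ] b) ∈ D.relbar →
      ∑ j, S.symm (vv j) * uu j = (D.ιC (eC' b)).L a := by
    intro a b n uu vv hrep
    have hE : (∑ j, S (uu j) * vv j) = S ((D.ιC (eC' b)).L a) := by
      have hc : ∀ c, ((∑ j, S (uu j) * vv j) - S ((D.ιC (eC' b)).L a)) * c = 0 := by
        intro c
        rw [sub_mul, Finset.sum_mul, hss (eC' b) c a]
        have h1 := hI1 a b c n uu vv hrep
        calc (∑ j, S (uu j) * vv j * c) - S a * ((D.ιB (D.SC (eC' b))).L c)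
            = (∑ j, S (uu j) * (vv j * c)) - S a * ((D.ιB (D.SC (eC' b))).L c) := by
              rw [Finset.sum_congr rfl fun j _ => mul_assoc _ _ _]
          _ = 0 := by rw [h1, sub_self]
      exact sub_eq_zero.1 (D.A_ndl _ hc)
    have hE' := congrArg S.symm hE
    rw [map_sum, LinearEquiv.symm_apply_apply] at hE'
    calc ∑ j, S.symm (vv j) * uu j
        = ∑ j, S.symm (S (uu j) * vv j) := by
          refine Finset.sum_congr rfl fun j _ => ?_
          rw [hsymm_mul, LinearEquiv.symm_apply_apply]
      _ = (D.ιC (eC' b)).L a := hE'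
  -- the two maps u ⊗ v ↦ (star S star v) * u and u ⊗ v ↦ S⁻¹ v * u
  set ΦT : A ⊗[ℂ] A →ₗ[ℂ] A := TensorProduct.lift (LinearMap.mk₂ ℂ
    (fun u v => star (S (star v)) * u)
    (fun u u' v => by simp only [mul_add])
    (fun c u v => by simp only [mul_smul_comm])
    (fun u v v' => by simp only [star_add, map_add, add_mul])
    (fun c u v => by simp only [star_smul, map_smul, star_star, smul_mul_assoc])) with hΦTdef
  have hΦT : ∀ u v, ΦT (u ⊗ₜ[ℂ] v) = star (S (star v)) * u := fun u v => rfl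
  set Φinv : A ⊗[ℂ] A →ₗ[ℂ] A := TensorProduct.lift (LinearMap.mk₂ ℂ
    (fun u v => S.symm v * u)
    (fun u u' v => by simp only [mul_add])
    (fun c u v => by simp only [mul_smul_comm])
    (fun u v v' => by simp only [map_add, add_mul])
    (fun c u v => by simp only [map_smul, smul_mul_assoc])) with hΦinvdef
  have hΦinv : ∀ u v, Φinv (u ⊗ₜ[ℂ] v) = S.symm v * u := fun u v => rfl
  have hΦTsum : ∀ (n : ℕ) (uu vv : Fin n → A),
      ΦT (∑ j, uu j ⊗ₜ[ℂ] vv j) = ∑ j, star (S (star (vv j))) * uu j := by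
    intro n uu vv
    rw [map_sum]
    exact Finset.sum_congr rfl fun j _ => hΦT _ _
  have hΦinvsum : ∀ (n : ℕ) (uu vv : Fin n → A),
      Φinv (∑ j, uu j ⊗ₜ[ℂ] vv j) = ∑ j, S.symm (vv j) * uu j := by
    intro n uu vv
    rw [map_sum]
    exact Finset.sum_congr rfl fun j _ => hΦinv _ _
  have hΦTrel : ∀ r ∈ D.relbar, ΦT r = 0 := by
    intro r hr
    obtain ⟨n, uu, vv, hw⟩ := exists_fin_sum r
    have hrep : (∑ j, uu j ⊗ₜ[ℂ] vv j) - D.Tl ((0 : A) ⊗ₜ[ℂ] (0 : A)) ∈ D.relbar := by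
      rw [TensorProduct.zero_tmul, map_zero, sub_zero, ← hw]; exact hr
    have h := hstar2 0 0 n uu vv hrep
    rw [map_zero] at h
    rw [hw, hΦTsum, h]
  have hΦinvrel : ∀ r ∈ D.relbar, Φinv r = 0 := by
    intro r hr
    obtain ⟨n, uu, vv, hw⟩ := exists_fin_sum r
    have hrep : (∑ j, uu j ⊗ₜ[ℂ] vv j) - D.Tl ((0 : A) ⊗ₜ[ℂ] (0 : A)) ∈ D.relbar := by
      rw [TensorProduct.zero_tmul, map_zero, sub_zero, ← hw]; exact hr
    have h := hTlInv 0 0 n uu vv hrep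
    rw [map_zero] at h
    rw [hw, hΦinvsum, h]
  have hTl0 : ∀ a b : A, ΦT (D.Tl (a ⊗ₜ[ℂ] b)) = Φinv (D.Tl (a ⊗ₜ[ℂ] b)) := by
    intro a b
    obtain ⟨n, uu, vv, hw⟩ := exists_fin_sum (D.Tl (a ⊗ₜ[ℂ] b))
    have hrep : (∑ j, uu j ⊗ₜ[ℂ] vv j) - D.Tl (a ⊗ₜ[ℂ] b) ∈ D.relbar := by
      rw [← hw, sub_self]; exact zero_mem _
    rw [hw, hΦTsum, hΦinvsum, hstar2 a b n uu vv hrep, hTlInv a b n uu vv hrep]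
  have hdiff : ∀ w, ΦT w = Φinv w := by
    intro w
    obtain ⟨u, hu⟩ := hTlsurj w
    have h1 : ΦT (D.Tl u) = Φinv (D.Tl u) := by
      have hcmp : ΦT ∘ₗ D.Tl = Φinv ∘ₗ D.Tl :=
        TensorProduct.ext' fun a b => by simpa using hTl0 a b
      have := DFunLike.congr_fun hcmp u
      simpa using this
    have h2 := hΦTrel _ hu
    have h3 := hΦinvrel _ hu
    rw [map_sub, sub_eq_zero] at h2 h3
    rw [← h2, ← h3]
    exact h1
  have hT : ∀ v : A, star (S (star v)) = S.symm v := by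
    intro v
    have h : ∀ u, (star (S (star v)) - S.symm v) * u = 0 := by
      intro u
      have hd := hdiff (u ⊗ₜ[ℂ] v)
      rw [hΦT, hΦinv] at hd
      rw [sub_mul, hd, sub_self]
    exact sub_eq_zero.1 (D.A_ndl _ h)
  -- conclusion
  intro a
  refine ⟨?_, ?_, ?_⟩
  · have h := H1 εB εC hεB hεC a
    rw [h, starC_invol]
  · have h := H1 εB εC hεB hεC (star a)
    rw [star_star] at h
    have h2 : εC a = starC (D.SB (εB (star a))) := by rw [h, starC_invol]
    rw [h2, starB_SC_starC_SB]
  · rw [hT a, LinearEquiv.apply_symm_apply]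


end Star17
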